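/- If the triangle P1P2P3 is nondegenerate and the weight conditions (W) hold, then the minimum value of F over ℝ² equals √d, and it is attained at the point P* = (x*, y*) with x* = (K1K2K3/(4 S σ d))·(x1/K1 + x2/K2 + x3/K3) and y* = (K1K2K3/(4 S σ d))·(y1/K1 + y2/K2 + y3/K3); that is, F(x*, y*) = √d and F(x,y) ≥ √d for all (x,y) ∈ ℝ². -/

import Mathlib

set_option maxHeartbeats 2000000

private lemma Kpos (a b c s R M : ℝ) (hb : 0 < b) (hs : 0 < s) (hR : 0 < R) (hM : 0 < M)
    (h1 : a^2 + b^2 = R^2) (h2 : c^2 + s^2 = M^2) (hH : 0 < c*R + a*M) :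
    0 < b*c + a*s := by
  have key : (b*c+a*s)*(b*M+s*R) = (c*R+a*M)*(M*R - a*c + b*s) := by
    linear_combination c*M*h1 + a*R*h2
  have hMR : (b*c+a*s)^2 = (M*R - (a*c - b*s))*(M*R + (a*c - b*s)) := by
    linear_combination (c^2+s^2)*h1 + R^2*h2
  have hbMsR : 0 < b*M + s*R := by nlinarith [mul_pos hb hM, mul_pos hs hR]
  by_contra hT
  push_neg at hT
  have h3 : M*R - a*c + b*s ≤ 0 := by nlinarith [mul_pos hH hbMsR]
  have h4 : 0 < M*R + (a*c - b*s) := by nlinarith [mul_pos hM hR, mul_pos hb hs]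
  have h5 : (b*c+a*s)^2 ≤ 0 := by nlinarith
  have h6 : b*c + a*s = 0 := by nlinarith [sq_nonneg (b*c+a*s)]
  have h7 : M*R - a*c + b*s = 0 := by
    rcases mul_eq_zero.mp (by rw [h6] at key; linarith [key] : (c*R+a*M)*(M*R - a*c + b*s) = 0) with h | h
    · linarith
    · exact h
  have h8 : b*(M*R) = -(R^2*s) := by linear_combination b*h7 - s*h1 + a*h6
  nlinarith [mul_pos hb (mul_pos hM hR), mul_pos (mul_pos hR hR) hs]

private lemma csineq (p q a b : ℝ) :
    p*a + q*b ≤ Real.sqrt (p^2+q^2) * Real.sqrt (a^2+b^2) := by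
  have h1 : p*a+q*b ≤ |p*a+q*b| := le_abs_self _
  have h2 : |p*a+q*b| = Real.sqrt ((p*a+q*b)^2) := (Real.sqrt_sq_eq_abs _).symm
  have h3 : Real.sqrt ((p*a+q*b)^2) ≤ Real.sqrt ((p^2+q^2)*(a^2+b^2)) :=
    Real.sqrt_le_sqrt (by nlinarith [sq_nonneg (p*b-q*a)])
  rw [Real.sqrt_mul (by positivity)] at h3
  linarith


private lemma lt_of_sq_lt_sq' (x y : ℝ) (hx : 0 < x) (hy : 0 < y) (h : x^2 < y^2) : x < y := by
  nlinarith

private lemma Qpos (m1 m2 m3 : ℝ) (h1 : 0 < m1) (h2 : 0 < m2) (h3 : 0 < m3)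
    (t1 : m1 < m2 + m3) (t2 : m2 < m1 + m3) (t3 : m3 < m1 + m2) :
    (0:ℝ) < -m1^4 - m2^4 - m3^4 + 2*m1^2*m2^2 + 2*m1^2*m3^2 + 2*m2^2*m3^2 := by
  nlinarith [mul_pos (mul_pos (show (0:ℝ) < m1+m2+m3 by linarith) (show (0:ℝ) < -m1+m2+m3 by linarith)) (mul_pos (show (0:ℝ) < m1-m2+m3 by linarith) (show (0:ℝ) < m1+m2-m3 by linarith))]

private lemma ptd (a b : ℝ) (h : a^2 + b^2 ≤ 0) : a = 0 ∧ b = 0 := by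
  constructor <;> nlinarith [sq_nonneg a, sq_nonneg b]

/-- The minimum value of `F` over `ℝ²` equals `√d`, attained at the explicit
point `P* = (x*, y*)`. -/
theorem min_value_sqrt_d
        (x1 y1 x2 y2 x3 y3 m1 m2 m3 : ℝ)
    (hm1 : 0 < m1) (hm2 : 0 < m2) (hm3 : 0 < m3)
    (hnd : x1*y2 + x2*y3 + x3*y1 - x1*y3 - x3*y2 - x2*y1 ≠ 0)
    (r12 r13 r23 S σ K1 K2 K3 : ℝ)
    (hr12 : r12 = Real.sqrt ((x1-x2)^2 + (y1-y2)^2))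
    (hr13 : r13 = Real.sqrt ((x1-x3)^2 + (y1-y3)^2))
    (hr23 : r23 = Real.sqrt ((x2-x3)^2 + (y2-y3)^2))
    (hS : S = |x1*y2 + x2*y3 + x3*y1 - x1*y3 - x3*y2 - x2*y1|)
    (hσ : σ = (1/2) * Real.sqrt
        (-m1^4 - m2^4 - m3^4 + 2*m1^2*m2^2 + 2*m1^2*m3^2 + 2*m2^2*m3^2))
    (hK1 : K1 = (r12^2 + r13^2 - r23^2)*σ + (m2^2 + m3^2 - m1^2)*S)
    (hK2 : K2 = (r23^2 + r12^2 - r13^2)*σ + (m1^2 + m3^2 - m2^2)*S)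
    (hK3 : K3 = (r13^2 + r23^2 - r12^2)*σ + (m1^2 + m2^2 - m3^2)*S)
    (cosα1 cosα2 cosα3 : ℝ)
    (hc1 : cosα1 = ((x2-x1)*(x3-x1) + (y2-y1)*(y3-y1)) / (r12 * r13))
    (hc2 : cosα2 = ((x1-x2)*(x3-x2) + (y1-y2)*(y3-y2)) / (r12 * r23))
    (hc3 : cosα3 = ((x1-x3)*(x2-x3) + (y1-y3)*(y2-y3)) / (r13 * r23))
    (hW1 : m1^2 < m2^2 + m3^2 + 2*m2*m3*cosα1)
    (hW2 : m2^2 < m1^2 + m3^2 + 2*m1*m3*cosα2)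
    (hW3 : m3^2 < m1^2 + m2^2 + 2*m1*m2*cosα3)
    (d : ℝ)
    (hd : d = (m1^2*K1 + m2^2*K2 + m3^2*K3) / (2*σ))
    (xs ys : ℝ)
    (hxs : xs = (K1*K2*K3/(4*S*σ*d)) * (x1/K1 + x2/K2 + x3/K3))
    (hys : ys = (K1*K2*K3/(4*S*σ*d)) * (y1/K1 + y2/K2 + y3/K3))
    (F : ℝ → ℝ → ℝ)
    (hF : ∀ x y, F x y =
        m1 * Real.sqrt ((x-x1)^2 + (y-y1)^2)
      + m2 * Real.sqrt ((x-x2)^2 + (y-y2)^2)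
      + m3 * Real.sqrt ((x-x3)^2 + (y-y3)^2)) :
    F xs ys = Real.sqrt d ∧ ∀ x y : ℝ, Real.sqrt d ≤ F x y := by
  -- nondegeneracy: pairwise distinct points
  have h12p : (0:ℝ) < (x1-x2)^2 + (y1-y2)^2 := by
    rcases lt_or_ge 0 ((x1-x2)^2 + (y1-y2)^2) with h | h
    · exact h
    · exfalso; apply hnd
      obtain ⟨hx0, hy0⟩ := ptd (x1-x2) (y1-y2) h
      have hx : x1 = x2 := by linarith
      have hy : y1 = y2 := by linarith
      rw [hx, hy]; ring
  have h13p : (0:ℝ) < (x1-x3)^2 + (y1-y3)^2 := by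
    rcases lt_or_ge 0 ((x1-x3)^2 + (y1-y3)^2) with h | h
    · exact h
    · exfalso; apply hnd
      obtain ⟨hx0, hy0⟩ := ptd (x1-x3) (y1-y3) h
      have hx : x1 = x3 := by linarith
      have hy : y1 = y3 := by linarith
      rw [hx, hy]; ring
  have h23p : (0:ℝ) < (x2-x3)^2 + (y2-y3)^2 := by
    rcases lt_or_ge 0 ((x2-x3)^2 + (y2-y3)^2) with h | h
    · exact h
    · exfalso; apply hnd
      obtain ⟨hx0, hy0⟩ := ptd (x2-x3) (y2-y3) h
      have hx : x2 = x3 := by linarith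
      have hy : y2 = y3 := by linarith
      rw [hx, hy]; ring
  have hr12p : 0 < r12 := by rw [hr12]; exact Real.sqrt_pos.mpr h12p
  have hr13p : 0 < r13 := by rw [hr13]; exact Real.sqrt_pos.mpr h13p
  have hr23p : 0 < r23 := by rw [hr23]; exact Real.sqrt_pos.mpr h23p
  have hr12sq : r12^2 = (x1-x2)^2 + (y1-y2)^2 := by rw [hr12]; exact Real.sq_sqrt h12p.le
  have hr13sq : r13^2 = (x1-x3)^2 + (y1-y3)^2 := by rw [hr13]; exact Real.sq_sqrt h13p.le
  have hr23sq : r23^2 = (x2-x3)^2 + (y2-y3)^2 := by rw [hr23]; exact Real.sq_sqrt h23p.le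
  have hSp : 0 < S := by rw [hS]; exact abs_pos.mpr hnd
  have hS2 : S^2 = (x1*y2 + x2*y3 + x3*y1 - x1*y3 - x3*y2 - x2*y1)^2 := by
    rw [hS]; exact sq_abs _
  -- triangle inequalities for the weights
  have hdot1le : (x2-x1)*(x3-x1) + (y2-y1)*(y3-y1) ≤ r12*r13 := by
    rw [hr12, hr13, show (x1-x2)^2+(y1-y2)^2 = (x2-x1)^2+(y2-y1)^2 from by ring,
      show (x1-x3)^2+(y1-y3)^2 = (x3-x1)^2+(y3-y1)^2 from by ring]
    exact csineq (x2-x1) (y2-y1) (x3-x1) (y3-y1)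
  have hdot2le : (x1-x2)*(x3-x2) + (y1-y2)*(y3-y2) ≤ r12*r23 := by
    rw [hr12, hr23, show (x2-x3)^2+(y2-y3)^2 = (x3-x2)^2+(y3-y2)^2 from by ring]
    exact csineq (x1-x2) (y1-y2) (x3-x2) (y3-y2)
  have hdot3le : (x1-x3)*(x2-x3) + (y1-y3)*(y2-y3) ≤ r13*r23 := by
    rw [hr13, hr23, show (x2-x3)^2+(y2-y3)^2 = (x2-x3)^2+(y2-y3)^2 from by ring]
    exact csineq (x1-x3) (y1-y3) (x2-x3) (y2-y3)
  have hcos1 : cosα1 ≤ 1 := by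
    rw [hc1, div_le_one (mul_pos hr12p hr13p)]; exact hdot1le
  have hcos2 : cosα2 ≤ 1 := by
    rw [hc2, div_le_one (mul_pos hr12p hr23p)]; exact hdot2le
  have hcos3 : cosα3 ≤ 1 := by
    rw [hc3, div_le_one (mul_pos hr13p hr23p)]; exact hdot3le
  have htri1 : m1 < m2 + m3 := by
    have hle : 2*m2*m3*cosα1 ≤ 2*m2*m3*1 :=
      mul_le_mul_of_nonneg_left hcos1 (by positivity)
    refine lt_of_sq_lt_sq' m1 (m2+m3) hm1 (by linarith) ?_
    calc m1^2 < m2^2 + m3^2 + 2*m2*m3*cosα1 := hW1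
      _ ≤ m2^2 + m3^2 + 2*m2*m3*1 := by linarith
      _ = (m2+m3)^2 := by ring
  have htri2 : m2 < m1 + m3 := by
    have hle : 2*m1*m3*cosα2 ≤ 2*m1*m3*1 :=
      mul_le_mul_of_nonneg_left hcos2 (by positivity)
    refine lt_of_sq_lt_sq' m2 (m1+m3) hm2 (by linarith) ?_
    calc m2^2 < m1^2 + m3^2 + 2*m1*m3*cosα2 := hW2
      _ ≤ m1^2 + m3^2 + 2*m1*m3*1 := by linarith
      _ = (m1+m3)^2 := by ring
  have htri3 : m3 < m1 + m2 := by
    have hle : 2*m1*m2*cosα3 ≤ 2*m1*m2*1 :=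
      mul_le_mul_of_nonneg_left hcos3 (by positivity)
    refine lt_of_sq_lt_sq' m3 (m1+m2) hm3 (by linarith) ?_
    calc m3^2 < m1^2 + m2^2 + 2*m1*m2*cosα3 := hW3
      _ ≤ m1^2 + m2^2 + 2*m1*m2*1 := by linarith
      _ = (m1+m2)^2 := by ring
  have hQp : (0:ℝ) < -m1^4 - m2^4 - m3^4 + 2*m1^2*m2^2 + 2*m1^2*m3^2 + 2*m2^2*m3^2 :=
    Qpos m1 m2 m3 hm1 hm2 hm3 htri1 htri2 htri3
  have hσp : 0 < σ := by
    rw [hσ]; have := Real.sqrt_pos.mpr hQp; linarith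
  have hσ2 : σ^2 = (-m1^4 - m2^4 - m3^4 + 2*m1^2*m2^2 + 2*m1^2*m3^2 + 2*m2^2*m3^2)/4 := by
    rw [hσ, mul_pow, Real.sq_sqrt hQp.le]; ring
  -- coordinate forms of the K's
  have hK1e : K1 = ((x1-x2)^2+(y1-y2)^2 + ((x1-x3)^2+(y1-y3)^2) - ((x2-x3)^2+(y2-y3)^2))*σ
      + (m2^2 + m3^2 - m1^2)*S := by
    rw [hK1, hr12sq, hr13sq, hr23sq]
  have hK2e : K2 = ((x2-x3)^2+(y2-y3)^2 + ((x1-x2)^2+(y1-y2)^2) - ((x1-x3)^2+(y1-y3)^2))*σ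
      + (m1^2 + m3^2 - m2^2)*S := by
    rw [hK2, hr12sq, hr13sq, hr23sq]
  have hK3e : K3 = ((x1-x3)^2+(y1-y3)^2 + ((x2-x3)^2+(y2-y3)^2) - ((x1-x2)^2+(y1-y2)^2))*σ
      + (m1^2 + m2^2 - m3^2)*S := by
    rw [hK3, hr12sq, hr13sq, hr23sq]
  -- positivity of the K's
  have hK1pos : 0 < K1 := by
    have hd1 : (x2-x1)*(x3-x1) + (y2-y1)*(y3-y1) = cosα1*(r12*r13) := by
      rw [hc1, div_mul_cancel₀ _ (mul_pos hr12p hr13p).ne']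
    have hH1 : 0 < (m2^2+m3^2-m1^2)*(r12*r13) + ((x2-x1)*(x3-x1)+(y2-y1)*(y3-y1))*(2*m2*m3) := by
      rw [hd1]
      linarith [mul_pos (mul_pos hr12p hr13p) (show (0:ℝ) < m2^2+m3^2-m1^2 + 2*m2*m3*cosα1 by linarith)]
    have hL1 : ((x2-x1)*(x3-x1)+(y2-y1)*(y3-y1))^2 + S^2 = (r12*r13)^2 := by
      rw [mul_pow, hr12sq, hr13sq]; linear_combination hS2
    have hM1 : (m2^2+m3^2-m1^2)^2 + (2*σ)^2 = (2*m2*m3)^2 := by linear_combination 4*hσ2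
    have h := Kpos ((x2-x1)*(x3-x1)+(y2-y1)*(y3-y1)) S (m2^2+m3^2-m1^2) (2*σ) (r12*r13) (2*m2*m3)
      hSp (by linarith) (mul_pos hr12p hr13p) (by positivity) hL1 hM1 hH1
    rw [hK1e]; linarith [h]
  have hK2pos : 0 < K2 := by
    have hd2 : (x1-x2)*(x3-x2) + (y1-y2)*(y3-y2) = cosα2*(r12*r23) := by
      rw [hc2, div_mul_cancel₀ _ (mul_pos hr12p hr23p).ne']
    have hH2 : 0 < (m1^2+m3^2-m2^2)*(r12*r23) + ((x1-x2)*(x3-x2)+(y1-y2)*(y3-y2))*(2*m1*m3) := by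
      rw [hd2]
      linarith [mul_pos (mul_pos hr12p hr23p) (show (0:ℝ) < m1^2+m3^2-m2^2 + 2*m1*m3*cosα2 by linarith)]
    have hL2 : ((x1-x2)*(x3-x2)+(y1-y2)*(y3-y2))^2 + S^2 = (r12*r23)^2 := by
      rw [mul_pow, hr12sq, hr23sq]; linear_combination hS2
    have hM2 : (m1^2+m3^2-m2^2)^2 + (2*σ)^2 = (2*m1*m3)^2 := by linear_combination 4*hσ2
    have h := Kpos ((x1-x2)*(x3-x2)+(y1-y2)*(y3-y2)) S (m1^2+m3^2-m2^2) (2*σ) (r12*r23) (2*m1*m3)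
      hSp (by linarith) (mul_pos hr12p hr23p) (by positivity) hL2 hM2 hH2
    rw [hK2e]; linarith [h]
  have hK3pos : 0 < K3 := by
    have hd3 : (x1-x3)*(x2-x3) + (y1-y3)*(y2-y3) = cosα3*(r13*r23) := by
      rw [hc3, div_mul_cancel₀ _ (mul_pos hr13p hr23p).ne']
    have hH3 : 0 < (m1^2+m2^2-m3^2)*(r13*r23) + ((x1-x3)*(x2-x3)+(y1-y3)*(y2-y3))*(2*m1*m2) := by
      rw [hd3]
      linarith [mul_pos (mul_pos hr13p hr23p) (show (0:ℝ) < m1^2+m2^2-m3^2 + 2*m1*m2*cosα3 by linarith)]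
    have hL3 : ((x1-x3)*(x2-x3)+(y1-y3)*(y2-y3))^2 + S^2 = (r13*r23)^2 := by
      rw [mul_pow, hr13sq, hr23sq]; linear_combination hS2
    have hM3 : (m1^2+m2^2-m3^2)^2 + (2*σ)^2 = (2*m1*m2)^2 := by linear_combination 4*hσ2
    have h := Kpos ((x1-x3)*(x2-x3)+(y1-y3)*(y2-y3)) S (m1^2+m2^2-m3^2) (2*σ) (r13*r23) (2*m1*m2)
      hSp (by linarith) (mul_pos hr13p hr23p) (by positivity) hL3 hM3 hH3
    rw [hK3e]; linarith [h]
  have hdp : 0 < d := by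
    rw [hd]
    apply div_pos
    · linarith [mul_pos (mul_pos hm1 hm1) hK1pos, mul_pos (mul_pos hm2 hm2) hK2pos,
        mul_pos (mul_pos hm3 hm3) hK3pos]
    · linarith
  have h2σd : 2*σ*d = m1^2*K1 + m2^2*K2 + m3^2*K3 := by
    rw [hd]; field_simp [hσp.ne']
  have hsd : 0 < Real.sqrt d := Real.sqrt_pos.mpr hdp
  -- the key product identity
  have hI2 : K1*K2 + K1*K3 + K2*K3 = 2*S*(m1^2*K1 + m2^2*K2 + m3^2*K3) := by
    rw [hK1e, hK2e, hK3e]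
    linear_combination (4*y2^2*x3^2 - 8*x2*y2*x3*y3 + 4*x2^2*y3^2 - 8*y1*y2*x3^2 + 8*y1*x2*x3*y3 + 8*y1*x2*y2*x3 - 8*y1*x2^2*y3 + 4*y1^2*x3^2 - 8*y1^2*x2*x3 + 4*y1^2*x2^2 + 8*x1*y2*x3*y3 - 8*x1*y2^2*x3 - 8*x1*x2*y3^2 + 8*x1*x2*y2*y3 - 8*x1*y1*x3*y3 + 8*x1*y1*y2*x3 + 8*x1*y1*x2*y3 - 8*x1*y1*x2*y2 + 4*x1^2*y3^2 - 8*x1^2*y2*y3 + 4*x1^2*y2^2)*hσ2 + (m3^4 - 2*m2^2*m3^2 + m2^4 - 2*m1^2*m3^2 - 2*m1^2*m2^2 + m1^4)*hS2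
  have hN : 4*S*σ*d = K1*K2 + K1*K3 + K2*K3 := by
    linear_combination 2*S*h2σd - hI2
  have hNp : 0 < 4*S*σ*d := by positivity
  have hNxs : (4*S*σ*d)*xs = x1*(K2*K3) + x2*(K1*K3) + x3*(K1*K2) := by
    rw [hxs]
    field_simp [hK1pos.ne', hK2pos.ne', hK3pos.ne', hSp.ne', hσp.ne', hdp.ne']
  have hNys : (4*S*σ*d)*ys = y1*(K2*K3) + y2*(K1*K3) + y3*(K1*K2) := by
    rw [hys]
    field_simp [hK1pos.ne', hK2pos.ne', hK3pos.ne', hSp.ne', hσp.ne', hdp.ne']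
  have hp1 : (4*S*σ*d)*(xs - x1) = K1*(K3*(x2-x1) + K2*(x3-x1)) := by
    linear_combination hNxs - x1*hN
  have hp2 : (4*S*σ*d)*(xs - x2) = K2*(K3*(x1-x2) + K1*(x3-x2)) := by
    linear_combination hNxs - x2*hN
  have hp3 : (4*S*σ*d)*(xs - x3) = K3*(K2*(x1-x3) + K1*(x2-x3)) := by
    linear_combination hNxs - x3*hN
  have hq1 : (4*S*σ*d)*(ys - y1) = K1*(K3*(y2-y1) + K2*(y3-y1)) := by
    linear_combination hNys - y1*hN
  have hq2 : (4*S*σ*d)*(ys - y2) = K2*(K3*(y1-y2) + K1*(y3-y2)) := by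
    linear_combination hNys - y2*hN
  have hq3 : (4*S*σ*d)*(ys - y3) = K3*(K2*(y1-y3) + K1*(y2-y3)) := by
    linear_combination hNys - y3*hN
  -- core algebraic identities
  have core1 : σ*(((x1-x2)^2+(y1-y2)^2)*K3^2 + ((x1-x3)^2+(y1-y3)^2)*K2^2
      + ((x1-x2)^2+(y1-y2)^2 + ((x1-x3)^2+(y1-y3)^2) - ((x2-x3)^2+(y2-y3)^2))*(K2*K3))
      = 2*m1^2*S^2*(m1^2*K1 + m2^2*K2 + m3^2*K3) := by
    rw [hK1e, hK2e, hK3e]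
    linear_combination (8*y2^2*x3^2*m1^2*S + 4*y2^2*x3^2*y3^2*σ + 4*y2^2*x3^4*σ - 8*y2^3*x3^2*y3*σ + 4*y2^4*x3^2*σ - 16*x2*y2*x3*y3*m1^2*S - 8*x2*y2*x3*y3^3*σ - 8*x2*y2*x3^3*y3*σ + 16*x2*y2^2*x3*y3^2*σ - 8*x2*y2^2*x3^3*σ - 8*x2*y2^3*x3*y3*σ + 8*x2^2*y3^2*m1^2*S + 4*x2^2*y3^4*σ + 4*x2^2*x3^2*y3^2*σ - 8*x2^2*y2*y3^3*σ + 16*x2^2*y2*x3^2*y3*σ + 4*x2^2*y2^2*y3^2*σ + 4*x2^2*y2^2*x3^2*σ - 8*x2^3*x3*y3^2*σ - 8*x2^3*y2*x3*y3*σ + 4*x2^4*y3^2*σ - 16*y1*y2*x3^2*m1^2*S - 8*y1*y2*x3^2*y3^2*σ - 8*y1*y2*x3^4*σ + 16*y1*y2^2*x3^2*y3*σ - 8*y1*y2^3*x3^2*σ + 16*y1*x2*x3*y3*m1^2*S + 8*y1*x2*x3*y3^3*σ + 8*y1*x2*x3^3*y3*σ + 16*y1*x2*y2*x3*m1^2*S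 - 8*y1*x2*y2*x3*y3^2*σ + 24*y1*x2*y2*x3^3*σ - 8*y1*x2*y2^2*x3*y3*σ + 8*y1*x2*y2^3*x3*σ - 16*y1*x2^2*y3*m1^2*S - 8*y1*x2^2*y3^3*σ - 24*y1*x2^2*x3^2*y3*σ + 16*y1*x2^2*y2*y3^2*σ - 24*y1*x2^2*y2*x3^2*σ - 8*y1*x2^2*y2^2*y3*σ + 24*y1*x2^3*x3*y3*σ + 8*y1*x2^3*y2*x3*σ - 8*y1*x2^4*y3*σ + 8*y1^2*x3^2*m1^2*S + 4*y1^2*x3^2*y3^2*σ + 4*y1^2*x3^4*σ - 8*y1^2*y2*x3^2*y3*σ + 4*y1^2*y2^2*x3^2*σ - 16*y1^2*x2*x3*m1^2*S - 8*y1^2*x2*x3*y3^2*σ - 16*y1^2*x2*x3^3*σ + 16*y1^2*x2*y2*x3*y3*σ - 8*y1^2*x2*y2^2*x3*σ + 8*y1^2*x2^2*m1^2*S + 4*y1^2*x2^2*y3^2*σ + 24*y1^2*x2^2*x3^2*σ - 8*y1^2*x2^2*y2*y3*σ + 4*y1^2*x2^2*y2^2*σ - 16*y1^2*x2^3*x3*σ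 + 4*y1^2*x2^4*σ + 16*x1*y2*x3*y3*m1^2*S + 8*x1*y2*x3*y3^3*σ + 8*x1*y2*x3^3*y3*σ - 16*x1*y2^2*x3*m1^2*S - 24*x1*y2^2*x3*y3^2*σ - 8*x1*y2^2*x3^3*σ + 24*x1*y2^3*x3*y3*σ - 8*x1*y2^4*x3*σ - 16*x1*x2*y3^2*m1^2*S - 8*x1*x2*y3^4*σ - 8*x1*x2*x3^2*y3^2*σ + 16*x1*x2*y2*y3*m1^2*S + 24*x1*x2*y2*y3^3*σ - 8*x1*x2*y2*x3^2*y3*σ - 24*x1*x2*y2^2*y3^2*σ + 16*x1*x2*y2^2*x3^2*σ + 8*x1*x2*y2^3*y3*σ + 16*x1*x2^2*x3*y3^2*σ - 8*x1*x2^2*y2*x3*y3*σ - 8*x1*x2^2*y2^2*x3*σ - 8*x1*x2^3*y3^2*σ + 8*x1*x2^3*y2*y3*σ - 16*x1*y1*x3*y3*m1^2*S - 8*x1*y1*x3*y3^3*σ - 8*x1*y1*x3^3*y3*σ + 16*x1*y1*y2*x3*m1^2*S + 24*x1*y1*y2*x3*y3^2*σ + 8*x1*y1*y2*x3^3*σ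 - 24*x1*y1*y2^2*x3*y3*σ + 8*x1*y1*y2^3*x3*σ + 16*x1*y1*x2*y3*m1^2*S + 8*x1*y1*x2*y3^3*σ + 24*x1*y1*x2*x3^2*y3*σ - 16*x1*y1*x2*y2*m1^2*S - 24*x1*y1*x2*y2*y3^2*σ - 24*x1*y1*x2*y2*x3^2*σ + 24*x1*y1*x2*y2^2*y3*σ - 8*x1*y1*x2*y2^3*σ - 24*x1*y1*x2^2*x3*y3*σ + 24*x1*y1*x2^2*y2*x3*σ + 8*x1*y1*x2^3*y3*σ - 8*x1*y1*x2^3*y2*σ + 8*x1^2*y3^2*m1^2*S + 4*x1^2*y3^4*σ + 4*x1^2*x3^2*y3^2*σ - 16*x1^2*y2*y3*m1^2*S - 16*x1^2*y2*y3^3*σ - 8*x1^2*y2*x3^2*y3*σ + 8*x1^2*y2^2*m1^2*S + 24*x1^2*y2^2*y3^2*σ + 4*x1^2*y2^2*x3^2*σ - 16*x1^2*y2^3*y3*σ + 4*x1^2*y2^4*σ - 8*x1^2*x2*x3*y3^2*σ + 16*x1^2*x2*y2*x3*y3*σ - 8*x1^2*x2*y2^2*x3*σ + 4*x1^2*x2^2*y3^2*σ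 - 8*x1^2*x2^2*y2*y3*σ + 4*x1^2*x2^2*y2^2*σ)*hσ2 + (2*m1^2*m3^4*S - 4*m1^2*m2^2*m3^2*S + 2*m1^2*m2^4*S - 4*m1^4*m3^2*S - 4*m1^4*m2^2*S + 2*m1^6*S + y3^2*m3^4*σ - 2*y3^2*m2^2*m3^2*σ + y3^2*m2^4*σ - 2*y3^2*m1^2*m3^2*σ - 2*y3^2*m1^2*m2^2*σ + y3^2*m1^4*σ + x3^2*m3^4*σ - 2*x3^2*m2^2*m3^2*σ + x3^2*m2^4*σ - 2*x3^2*m1^2*m3^2*σ - 2*x3^2*m1^2*m2^2*σ + x3^2*m1^4*σ - 2*y2*y3*m3^4*σ + 4*y2*y3*m2^2*m3^2*σ - 2*y2*y3*m2^4*σ + 4*y2*y3*m1^2*m3^2*σ + 4*y2*y3*m1^2*m2^2*σ - 2*y2*y3*m1^4*σ + y2^2*m3^4*σ - 2*y2^2*m2^2*m3^2*σ + y2^2*m2^4*σ - 2*y2^2*m1^2*m3^2*σ - 2*y2^2*m1^2*m2^2*σ + y2^2*m1^4*σ - 2*x2*x3*m3^4*σ + 4*x2*x3*m2^2*m3^2*σ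 - 2*x2*x3*m2^4*σ + 4*x2*x3*m1^2*m3^2*σ + 4*x2*x3*m1^2*m2^2*σ - 2*x2*x3*m1^4*σ + x2^2*m3^4*σ - 2*x2^2*m2^2*m3^2*σ + x2^2*m2^4*σ - 2*x2^2*m1^2*m3^2*σ - 2*x2^2*m1^2*m2^2*σ + x2^2*m1^4*σ)*hS2
  have core2 : σ*(((x1-x2)^2+(y1-y2)^2)*K3^2 + ((x2-x3)^2+(y2-y3)^2)*K1^2
      + ((x2-x3)^2+(y2-y3)^2 + ((x1-x2)^2+(y1-y2)^2) - ((x1-x3)^2+(y1-y3)^2))*(K1*K3))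
      = 2*m2^2*S^2*(m1^2*K1 + m2^2*K2 + m3^2*K3) := by
    rw [hK1e, hK2e, hK3e]
    linear_combination (8*y2^2*x3^2*m2^2*S + 4*y2^2*x3^2*y3^2*σ + 4*y2^2*x3^4*σ - 16*x2*y2*x3*y3*m2^2*S - 8*x2*y2*x3*y3^3*σ - 8*x2*y2*x3^3*y3*σ + 8*x2^2*y3^2*m2^2*S + 4*x2^2*y3^4*σ + 4*x2^2*x3^2*y3^2*σ - 16*y1*y2*x3^2*m2^2*S - 8*y1*y2*x3^2*y3^2*σ - 8*y1*y2*x3^4*σ - 8*y1*y2^2*x3^2*y3*σ + 16*y1*x2*x3*y3*m2^2*S + 8*y1*x2*x3*y3^3*σ + 8*y1*x2*x3^3*y3*σ + 16*y1*x2*y2*x3*m2^2*S + 24*y1*x2*y2*x3*y3^2*σ + 8*y1*x2*y2*x3^3*σ - 16*y1*x2^2*y3*m2^2*S - 16*y1*x2^2*y3^3*σ - 8*y1*x2^2*x3^2*y3*σ + 8*y1^2*x3^2*m2^2*S + 4*y1^2*x3^2*y3^2*σ + 4*y1^2*x3^4*σ + 16*y1^2*y2*x3^2*y3*σ + 4*y1^2*y2^2*x3^2*σ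 - 16*y1^2*x2*x3*m2^2*S - 24*y1^2*x2*x3*y3^2*σ - 8*y1^2*x2*x3^3*σ - 24*y1^2*x2*y2*x3*y3*σ + 8*y1^2*x2^2*m2^2*S + 24*y1^2*x2^2*y3^2*σ + 4*y1^2*x2^2*x3^2*σ - 8*y1^3*x3^2*y3*σ - 8*y1^3*y2*x3^2*σ + 24*y1^3*x2*x3*y3*σ + 8*y1^3*x2*y2*x3*σ - 16*y1^3*x2^2*y3*σ + 4*y1^4*x3^2*σ - 8*y1^4*x2*x3*σ + 4*y1^4*x2^2*σ + 16*x1*y2*x3*y3*m2^2*S + 8*x1*y2*x3*y3^3*σ + 8*x1*y2*x3^3*y3*σ - 16*x1*y2^2*x3*m2^2*S - 8*x1*y2^2*x3*y3^2*σ - 16*x1*y2^2*x3^3*σ - 16*x1*x2*y3^2*m2^2*S - 8*x1*x2*y3^4*σ - 8*x1*x2*x3^2*y3^2*σ + 16*x1*x2*y2*y3*m2^2*S + 8*x1*x2*y2*y3^3*σ + 24*x1*x2*y2*x3^2*y3*σ - 8*x1*x2^2*x3*y3^2*σ - 16*x1*y1*x3*y3*m2^2*S - 8*x1*y1*x3*y3^3*σ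 - 8*x1*y1*x3^3*y3*σ + 16*x1*y1*y2*x3*m2^2*S - 8*x1*y1*y2*x3*y3^2*σ + 24*x1*y1*y2*x3^3*σ + 16*x1*y1*y2^2*x3*y3*σ + 16*x1*y1*x2*y3*m2^2*S + 24*x1*y1*x2*y3^3*σ - 8*x1*y1*x2*x3^2*y3*σ - 16*x1*y1*x2*y2*m2^2*S - 24*x1*y1*x2*y2*y3^2*σ - 24*x1*y1*x2*y2*x3^2*σ + 16*x1*y1*x2^2*x3*y3*σ + 16*x1*y1^2*x3*y3^2*σ - 8*x1*y1^2*x3^3*σ - 8*x1*y1^2*y2*x3*y3*σ - 8*x1*y1^2*y2^2*x3*σ - 24*x1*y1^2*x2*y3^2*σ + 16*x1*y1^2*x2*x3^2*σ + 24*x1*y1^2*x2*y2*y3*σ - 8*x1*y1^2*x2^2*x3*σ - 8*x1*y1^3*x3*y3*σ + 8*x1*y1^3*y2*x3*σ + 8*x1*y1^3*x2*y3*σ - 8*x1*y1^3*x2*y2*σ + 8*x1^2*y3^2*m2^2*S + 4*x1^2*y3^4*σ + 4*x1^2*x3^2*y3^2*σ - 16*x1^2*y2*y3*m2^2*S - 8*x1^2*y2*y3^3*σ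 - 24*x1^2*y2*x3^2*y3*σ + 8*x1^2*y2^2*m2^2*S + 4*x1^2*y2^2*y3^2*σ + 24*x1^2*y2^2*x3^2*σ + 16*x1^2*x2*x3*y3^2*σ - 24*x1^2*x2*y2*x3*y3*σ + 4*x1^2*x2^2*y3^2*σ - 8*x1^2*y1*y3^3*σ + 16*x1^2*y1*x3^2*y3*σ + 16*x1^2*y1*y2*y3^2*σ - 24*x1^2*y1*y2*x3^2*σ - 8*x1^2*y1*y2^2*y3*σ - 8*x1^2*y1*x2*x3*y3*σ + 24*x1^2*y1*x2*y2*x3*σ - 8*x1^2*y1*x2^2*y3*σ + 4*x1^2*y1^2*y3^2*σ + 4*x1^2*y1^2*x3^2*σ - 8*x1^2*y1^2*y2*y3*σ + 4*x1^2*y1^2*y2^2*σ - 8*x1^2*y1^2*x2*x3*σ + 4*x1^2*y1^2*x2^2*σ - 8*x1^3*x3*y3^2*σ + 24*x1^3*y2*x3*y3*σ - 16*x1^3*y2^2*x3*σ - 8*x1^3*x2*y3^2*σ + 8*x1^3*x2*y2*y3*σ - 8*x1^3*y1*x3*y3*σ + 8*x1^3*y1*y2*x3*σ + 8*x1^3*y1*x2*y3*σ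 - 8*x1^3*y1*x2*y2*σ + 4*x1^4*y3^2*σ - 8*x1^4*y2*y3*σ + 4*x1^4*y2^2*σ)*hσ2 + (2*m2^2*m3^4*S - 4*m2^4*m3^2*S + 2*m2^6*S - 4*m1^2*m2^2*m3^2*S - 4*m1^2*m2^4*S + 2*m1^4*m2^2*S + y3^2*m3^4*σ - 2*y3^2*m2^2*m3^2*σ + y3^2*m2^4*σ - 2*y3^2*m1^2*m3^2*σ - 2*y3^2*m1^2*m2^2*σ + y3^2*m1^4*σ + x3^2*m3^4*σ - 2*x3^2*m2^2*m3^2*σ + x3^2*m2^4*σ - 2*x3^2*m1^2*m3^2*σ - 2*x3^2*m1^2*m2^2*σ + x3^2*m1^4*σ - 2*y1*y3*m3^4*σ + 4*y1*y3*m2^2*m3^2*σ - 2*y1*y3*m2^4*σ + 4*y1*y3*m1^2*m3^2*σ + 4*y1*y3*m1^2*m2^2*σ - 2*y1*y3*m1^4*σ + y1^2*m3^4*σ - 2*y1^2*m2^2*m3^2*σ + y1^2*m2^4*σ - 2*y1^2*m1^2*m3^2*σ - 2*y1^2*m1^2*m2^2*σ + y1^2*m1^4*σ - 2*x1*x3*m3^4*σ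 + 4*x1*x3*m2^2*m3^2*σ - 2*x1*x3*m2^4*σ + 4*x1*x3*m1^2*m3^2*σ + 4*x1*x3*m1^2*m2^2*σ - 2*x1*x3*m1^4*σ + x1^2*m3^4*σ - 2*x1^2*m2^2*m3^2*σ + x1^2*m2^4*σ - 2*x1^2*m1^2*m3^2*σ - 2*x1^2*m1^2*m2^2*σ + x1^2*m1^4*σ)*hS2
  have core3 : σ*(((x1-x3)^2+(y1-y3)^2)*K2^2 + ((x2-x3)^2+(y2-y3)^2)*K1^2
      + ((x1-x3)^2+(y1-y3)^2 + ((x2-x3)^2+(y2-y3)^2) - ((x1-x2)^2+(y1-y2)^2))*(K1*K2))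
      = 2*m3^2*S^2*(m1^2*K1 + m2^2*K2 + m3^2*K3) := by
    rw [hK1e, hK2e, hK3e]
    linear_combination (8*y2^2*x3^2*m3^2*S + 4*y2^4*x3^2*σ - 16*x2*y2*x3*y3*m3^2*S - 8*x2*y2^3*x3*y3*σ + 8*x2^2*y3^2*m3^2*S + 4*x2^2*y2^2*y3^2*σ + 4*x2^2*y2^2*x3^2*σ - 8*x2^3*y2*x3*y3*σ + 4*x2^4*y3^2*σ - 16*y1*y2*x3^2*m3^2*S - 16*y1*y2^3*x3^2*σ + 16*y1*x2*x3*y3*m3^2*S + 16*y1*x2*y2*x3*m3^2*S + 24*y1*x2*y2^2*x3*y3*σ + 8*y1*x2*y2^3*x3*σ - 16*y1*x2^2*y3*m3^2*S - 8*y1*x2^2*y2*y3^2*σ - 8*y1*x2^2*y2*x3^2*σ - 8*y1*x2^2*y2^2*y3*σ + 8*y1*x2^3*x3*y3*σ + 8*y1*x2^3*y2*x3*σ - 8*y1*x2^4*y3*σ + 8*y1^2*x3^2*m3^2*S + 24*y1^2*y2^2*x3^2*σ - 16*y1^2*x2*x3*m3^2*S - 24*y1^2*x2*y2*x3*y3*σ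 - 24*y1^2*x2*y2^2*x3*σ + 8*y1^2*x2^2*m3^2*S + 4*y1^2*x2^2*y3^2*σ + 4*y1^2*x2^2*x3^2*σ + 16*y1^2*x2^2*y2*y3*σ + 4*y1^2*x2^2*y2^2*σ - 8*y1^2*x2^3*x3*σ + 4*y1^2*x2^4*σ - 16*y1^3*y2*x3^2*σ + 8*y1^3*x2*x3*y3*σ + 24*y1^3*x2*y2*x3*σ - 8*y1^3*x2^2*y3*σ - 8*y1^3*x2^2*y2*σ + 4*y1^4*x3^2*σ - 8*y1^4*x2*x3*σ + 4*y1^4*x2^2*σ + 16*x1*y2*x3*y3*m3^2*S - 16*x1*y2^2*x3*m3^2*S + 8*x1*y2^3*x3*y3*σ - 8*x1*y2^4*x3*σ - 16*x1*x2*y3^2*m3^2*S + 16*x1*x2*y2*y3*m3^2*S - 8*x1*x2*y2^2*y3^2*σ - 8*x1*x2*y2^2*x3^2*σ + 8*x1*x2*y2^3*y3*σ + 24*x1*x2^2*y2*x3*y3*σ - 8*x1*x2^2*y2^2*x3*σ - 16*x1*x2^3*y3^2*σ + 8*x1*x2^3*y2*y3*σ - 16*x1*y1*x3*y3*m3^2*S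 + 16*x1*y1*y2*x3*m3^2*S - 24*x1*y1*y2^2*x3*y3*σ + 24*x1*y1*y2^3*x3*σ + 16*x1*y1*x2*y3*m3^2*S - 16*x1*y1*x2*y2*m3^2*S + 16*x1*y1*x2*y2*y3^2*σ + 16*x1*y1*x2*y2*x3^2*σ - 8*x1*y1*x2*y2^2*y3*σ - 8*x1*y1*x2*y2^3*σ - 24*x1*y1*x2^2*x3*y3*σ - 8*x1*y1*x2^2*y2*x3*σ + 24*x1*y1*x2^3*y3*σ - 8*x1*y1*x2^3*y2*σ + 24*x1*y1^2*y2*x3*y3*σ - 24*x1*y1^2*y2^2*x3*σ - 8*x1*y1^2*x2*y3^2*σ - 8*x1*y1^2*x2*x3^2*σ - 8*x1*y1^2*x2*y2*y3*σ + 16*x1*y1^2*x2*y2^2*σ + 16*x1*y1^2*x2^2*x3*σ - 8*x1*y1^2*x2^3*σ - 8*x1*y1^3*x3*y3*σ + 8*x1*y1^3*y2*x3*σ + 8*x1*y1^3*x2*y3*σ - 8*x1*y1^3*x2*y2*σ + 8*x1^2*y3^2*m3^2*S - 16*x1^2*y2*y3*m3^2*S + 8*x1^2*y2^2*m3^2*S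 + 4*x1^2*y2^2*y3^2*σ + 4*x1^2*y2^2*x3^2*σ - 8*x1^2*y2^3*y3*σ + 4*x1^2*y2^4*σ - 24*x1^2*x2*y2*x3*y3*σ + 16*x1^2*x2*y2^2*x3*σ + 24*x1^2*x2^2*y3^2*σ - 24*x1^2*x2^2*y2*y3*σ + 4*x1^2*x2^2*y2^2*σ - 8*x1^2*y1*y2*y3^2*σ - 8*x1^2*y1*y2*x3^2*σ + 16*x1^2*y1*y2^2*y3*σ - 8*x1^2*y1*y2^3*σ + 24*x1^2*y1*x2*x3*y3*σ - 8*x1^2*y1*x2*y2*x3*σ - 24*x1^2*y1*x2^2*y3*σ + 16*x1^2*y1*x2^2*y2*σ + 4*x1^2*y1^2*y3^2*σ + 4*x1^2*y1^2*x3^2*σ - 8*x1^2*y1^2*y2*y3*σ + 4*x1^2*y1^2*y2^2*σ - 8*x1^2*y1^2*x2*x3*σ + 4*x1^2*y1^2*x2^2*σ + 8*x1^3*y2*x3*y3*σ - 8*x1^3*y2^2*x3*σ - 16*x1^3*x2*y3^2*σ + 24*x1^3*x2*y2*y3*σ - 8*x1^3*x2*y2^2*σ - 8*x1^3*y1*x3*y3*σ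 + 8*x1^3*y1*y2*x3*σ + 8*x1^3*y1*x2*y3*σ - 8*x1^3*y1*x2*y2*σ + 4*x1^4*y3^2*σ - 8*x1^4*y2*y3*σ + 4*x1^4*y2^2*σ)*hσ2 + (2*m3^6*S - 4*m2^2*m3^4*S + 2*m2^4*m3^2*S - 4*m1^2*m3^4*S - 4*m1^2*m2^2*m3^2*S + 2*m1^4*m3^2*S + y2^2*m3^4*σ - 2*y2^2*m2^2*m3^2*σ + y2^2*m2^4*σ - 2*y2^2*m1^2*m3^2*σ - 2*y2^2*m1^2*m2^2*σ + y2^2*m1^4*σ + x2^2*m3^4*σ - 2*x2^2*m2^2*m3^2*σ + x2^2*m2^4*σ - 2*x2^2*m1^2*m3^2*σ - 2*x2^2*m1^2*m2^2*σ + x2^2*m1^4*σ - 2*y1*y2*m3^4*σ + 4*y1*y2*m2^2*m3^2*σ - 2*y1*y2*m2^4*σ + 4*y1*y2*m1^2*m3^2*σ + 4*y1*y2*m1^2*m2^2*σ - 2*y1*y2*m1^4*σ + y1^2*m3^4*σ - 2*y1^2*m2^2*m3^2*σ + y1^2*m2^4*σ - 2*y1^2*m1^2*m3^2*σ - 2*y1^2*m1^2*m2^2*σ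 + y1^2*m1^4*σ - 2*x1*x2*m3^4*σ + 4*x1*x2*m2^2*m3^2*σ - 2*x1*x2*m2^4*σ + 4*x1*x2*m1^2*m3^2*σ + 4*x1*x2*m1^2*m2^2*σ - 2*x1*x2*m1^4*σ + x1^2*m3^4*σ - 2*x1^2*m2^2*m3^2*σ + x1^2*m2^4*σ - 2*x1^2*m1^2*m3^2*σ - 2*x1^2*m1^2*m2^2*σ + x1^2*m1^4*σ)*hS2
  -- squared distances from the optimal point
  have h16 : (16*S^2*σ^2*d^2) ≠ 0 := by positivity
  have hsq1 : 4*σ^2*d*((xs-x1)^2+(ys-y1)^2) = m1^2*K1^2 := by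
    apply mul_left_cancel₀ h16
    have step1 : (4*S*σ*d*(xs-x1))^2 + (4*S*σ*d*(ys-y1))^2
        = K1^2*(((x1-x2)^2+(y1-y2)^2)*K3^2 + ((x1-x3)^2+(y1-y3)^2)*K2^2
          + ((x1-x2)^2+(y1-y2)^2 + ((x1-x3)^2+(y1-y3)^2) - ((x2-x3)^2+(y2-y3)^2))*(K2*K3)) := by
      linear_combination (4*S*σ*d*(xs-x1) + K1*(K3*(x2-x1)+K2*(x3-x1)))*hp1
        + (4*S*σ*d*(ys-y1) + K1*(K3*(y2-y1)+K2*(y3-y1)))*hq1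
    linear_combination 4*σ^2*d*step1 + 4*σ*d*K1^2*core1 - 8*σ*d*m1^2*K1^2*S^2*h2σd
  have hsq2 : 4*σ^2*d*((xs-x2)^2+(ys-y2)^2) = m2^2*K2^2 := by
    apply mul_left_cancel₀ h16
    have step2 : (4*S*σ*d*(xs-x2))^2 + (4*S*σ*d*(ys-y2))^2
        = K2^2*(((x1-x2)^2+(y1-y2)^2)*K3^2 + ((x2-x3)^2+(y2-y3)^2)*K1^2
          + ((x2-x3)^2+(y2-y3)^2 + ((x1-x2)^2+(y1-y2)^2) - ((x1-x3)^2+(y1-y3)^2))*(K1*K3)) := by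
      linear_combination (4*S*σ*d*(xs-x2) + K2*(K3*(x1-x2)+K1*(x3-x2)))*hp2
        + (4*S*σ*d*(ys-y2) + K2*(K3*(y1-y2)+K1*(y3-y2)))*hq2
    linear_combination 4*σ^2*d*step2 + 4*σ*d*K2^2*core2 - 8*σ*d*m2^2*K2^2*S^2*h2σd
  have hsq3 : 4*σ^2*d*((xs-x3)^2+(ys-y3)^2) = m3^2*K3^2 := by
    apply mul_left_cancel₀ h16
    have step3 : (4*S*σ*d*(xs-x3))^2 + (4*S*σ*d*(ys-y3))^2
        = K3^2*(((x1-x3)^2+(y1-y3)^2)*K2^2 + ((x2-x3)^2+(y2-y3)^2)*K1^2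
          + ((x1-x3)^2+(y1-y3)^2 + ((x2-x3)^2+(y2-y3)^2) - ((x1-x2)^2+(y1-y2)^2))*(K1*K2)) := by
      linear_combination (4*S*σ*d*(xs-x3) + K3*(K2*(x1-x3)+K1*(x2-x3)))*hp3
        + (4*S*σ*d*(ys-y3) + K3*(K2*(y1-y3)+K1*(y2-y3)))*hq3
    linear_combination 4*σ^2*d*step3 + 4*σ*d*K3^2*core3 - 8*σ*d*m3^2*K3^2*S^2*h2σd
  have hden : (0:ℝ) < 2*σ*Real.sqrt d := by positivity
  have hdsq : (2*σ*Real.sqrt d)^2 = 4*σ^2*d := by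
    rw [mul_pow, mul_pow, Real.sq_sqrt hdp.le]; ring
  have hdist1 : Real.sqrt ((xs-x1)^2+(ys-y1)^2) = m1*K1/(2*σ*Real.sqrt d) := by
    have hrpos : 0 ≤ m1*K1/(2*σ*Real.sqrt d) := by positivity
    have heq : (xs-x1)^2+(ys-y1)^2 = (m1*K1/(2*σ*Real.sqrt d))^2 := by
      rw [div_pow, eq_div_iff (pow_ne_zero 2 hden.ne'), hdsq]
      linear_combination hsq1
    rw [heq, Real.sqrt_sq hrpos]
  have hdist2 : Real.sqrt ((xs-x2)^2+(ys-y2)^2) = m2*K2/(2*σ*Real.sqrt d) := by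
    have hrpos : 0 ≤ m2*K2/(2*σ*Real.sqrt d) := by positivity
    have heq : (xs-x2)^2+(ys-y2)^2 = (m2*K2/(2*σ*Real.sqrt d))^2 := by
      rw [div_pow, eq_div_iff (pow_ne_zero 2 hden.ne'), hdsq]
      linear_combination hsq2
    rw [heq, Real.sqrt_sq hrpos]
  have hdist3 : Real.sqrt ((xs-x3)^2+(ys-y3)^2) = m3*K3/(2*σ*Real.sqrt d) := by
    have hrpos : 0 ≤ m3*K3/(2*σ*Real.sqrt d) := by positivity
    have heq : (xs-x3)^2+(ys-y3)^2 = (m3*K3/(2*σ*Real.sqrt d))^2 := by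
      rw [div_pow, eq_div_iff (pow_ne_zero 2 hden.ne'), hdsq]
      linear_combination hsq3
    rw [heq, Real.sqrt_sq hrpos]
  constructor
  · -- value at the optimal point
    rw [hF, hdist1, hdist2, hdist3]
    field_simp
    linear_combination -h2σd - 2*σ*(Real.mul_self_sqrt hdp.le)
  · -- lower bound
    intro x y
    have factA : (xs-x1)*(K2*K3) + (xs-x2)*(K1*K3) + (xs-x3)*(K1*K2) = 0 := by
      apply mul_left_cancel₀ hNp.ne'
      linear_combination K2*K3*hp1 + K1*K3*hp2 + K1*K2*hp3
    have factB : (ys-y1)*(K2*K3) + (ys-y2)*(K1*K3) + (ys-y3)*(K1*K2) = 0 := by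
      apply mul_left_cancel₀ hNp.ne'
      linear_combination K2*K3*hq1 + K1*K3*hq2 + K1*K2*hq3
    have h2σdne : (2*σ*d) ≠ 0 := by positivity
    have factC : 2*σ*(((xs-x1)^2+(ys-y1)^2)*(K2*K3) + ((xs-x2)^2+(ys-y2)^2)*(K1*K3)
        + ((xs-x3)^2+(ys-y3)^2)*(K1*K2)) = K1*K2*K3 := by
      apply mul_left_cancel₀ h2σdne
      linear_combination K2*K3*hsq1 + K1*K3*hsq2 + K1*K2*hsq3 - K1*K2*K3*h2σd
    have hkey : 2*σ*(((xs-x1)*(x-x1)+(ys-y1)*(y-y1))*(K2*K3)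
        + ((xs-x2)*(x-x2)+(ys-y2)*(y-y2))*(K1*K3)
        + ((xs-x3)*(x-x3)+(ys-y3)*(y-y3))*(K1*K2)) = K1*K2*K3 := by
      linear_combination (2*σ*(x-xs))*factA + (2*σ*(y-ys))*factB + factC
    have key1 : (2*σ*Real.sqrt d/K1)*((xs-x1)*(x-x1)+(ys-y1)*(y-y1))
        ≤ m1 * Real.sqrt ((x-x1)^2+(y-y1)^2) := by
      have hc : 0 < 2*σ*Real.sqrt d/K1 := div_pos hden hK1pos
      have hCS := csineq (xs-x1) (ys-y1) (x-x1) (y-y1)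
      rw [hdist1] at hCS
      have h := mul_le_mul_of_nonneg_left hCS hc.le
      have heq : (2*σ*Real.sqrt d/K1)*((m1*K1/(2*σ*Real.sqrt d))*Real.sqrt ((x-x1)^2+(y-y1)^2))
          = m1 * Real.sqrt ((x-x1)^2+(y-y1)^2) := by
        field_simp
      rw [heq] at h
      exact h
    have key2 : (2*σ*Real.sqrt d/K2)*((xs-x2)*(x-x2)+(ys-y2)*(y-y2))
        ≤ m2 * Real.sqrt ((x-x2)^2+(y-y2)^2) := by
      have hc : 0 < 2*σ*Real.sqrt d/K2 := div_pos hden hK2pos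
      have hCS := csineq (xs-x2) (ys-y2) (x-x2) (y-y2)
      rw [hdist2] at hCS
      have h := mul_le_mul_of_nonneg_left hCS hc.le
      have heq : (2*σ*Real.sqrt d/K2)*((m2*K2/(2*σ*Real.sqrt d))*Real.sqrt ((x-x2)^2+(y-y2)^2))
          = m2 * Real.sqrt ((x-x2)^2+(y-y2)^2) := by
        field_simp
      rw [heq] at h
      exact h
    have key3 : (2*σ*Real.sqrt d/K3)*((xs-x3)*(x-x3)+(ys-y3)*(y-y3))
        ≤ m3 * Real.sqrt ((x-x3)^2+(y-y3)^2) := by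
      have hc : 0 < 2*σ*Real.sqrt d/K3 := div_pos hden hK3pos
      have hCS := csineq (xs-x3) (ys-y3) (x-x3) (y-y3)
      rw [hdist3] at hCS
      have h := mul_le_mul_of_nonneg_left hCS hc.le
      have heq : (2*σ*Real.sqrt d/K3)*((m3*K3/(2*σ*Real.sqrt d))*Real.sqrt ((x-x3)^2+(y-y3)^2))
          = m3 * Real.sqrt ((x-x3)^2+(y-y3)^2) := by
        field_simp
      rw [heq] at h
      exact h
    have hsum : (2*σ*Real.sqrt d/K1)*((xs-x1)*(x-x1)+(ys-y1)*(y-y1))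
        + (2*σ*Real.sqrt d/K2)*((xs-x2)*(x-x2)+(ys-y2)*(y-y2))
        + (2*σ*Real.sqrt d/K3)*((xs-x3)*(x-x3)+(ys-y3)*(y-y3)) = Real.sqrt d := by
      field_simp
      linear_combination hkey
    rw [hF]
    calc Real.sqrt d = _ := hsum.symm
      _ ≤ _ := by linarith [key1, key2, key3]
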